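/- Let n ≥ 1 and let c be a nonzero real number. If B is an n×n random real matrix whose diagonal entries B_ii for i ≠ 1 are fixed equal to 1 and whose remaining entries (all off-diagonal entries together with the entry B_11) are independent, each distributed according to a Borel probability measure on ℝ that is atomless off 0, then P(det B = c) = 0. -/

import Mathlib

open MeasureTheory

lemma pi_linear_eq_const_zero :
    ∀ (n : ℕ) (ν : Fin n → Measure ℝ), (∀ j, IsProbabilityMeasure (ν j)) →
    (∀ j, ∀ x : ℝ, x ≠ 0 → ν j {x} = 0) → ∀ (a : Fin n → ℝ) (c : ℝ), c ≠ 0 →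
    Measure.pi ν {r : Fin n → ℝ | ∑ j, a j * r j = c} = 0 := by
  intro n
  induction n with
  | zero =>
    intro ν _ _ a c hc
    have h0 : {r : Fin 0 → ℝ | ∑ j, a j * r j = c} = ∅ := by
      ext r; simp [hc.symm]
    rw [h0, measure_empty]
  | succ m ih =>
    intro ν hprob hat a c hc
    haveI := hprob
    set S : Set (Fin (m+1) → ℝ) := {r | ∑ j, a j * r j = c} with hSdef
    set e := MeasurableEquiv.piFinSuccAbove (fun _ : Fin (m+1) => ℝ) 0 with he
    have hmp := measurePreserving_piFinSuccAbove ν 0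
    have key : Measure.pi ν S
        = ((ν 0).prod (Measure.pi fun j => ν ((0 : Fin (m+1)).succAbove j)))
          (e.symm ⁻¹' S) := by
      rw [← hmp.measure_preimage_equiv]
      congr 1
      ext r
      rw [Set.mem_preimage, Set.mem_preimage, MeasurableEquiv.symm_apply_apply]
    rw [key]
    have hTmeas : MeasurableSet (e.symm ⁻¹' S) := by
      have hmS : MeasurableSet S := by
        have : Measurable fun r : Fin (m+1) → ℝ => ∑ j, a j * r j :=
          Finset.measurable_sum _ fun j _ => (measurable_pi_apply j).const_mul _
        exact this (measurableSet_singleton c)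
      exact e.symm.measurable hmS
    rw [Measure.prod_apply hTmeas]
    have hae : ∀ᵐ x ∂ (ν 0), c - a 0 * x ≠ 0 := by
      by_cases ha : a 0 = 0
      · filter_upwards with x; simp [ha, hc]
      · have hpt : (ν 0) {x : ℝ | c - a 0 * x = 0} = 0 := by
          have : {x : ℝ | c - a 0 * x = 0} = {c / a 0} := by
            ext x
            constructor
            · intro hx
              have : a 0 * x = c := by linarith [Set.mem_setOf_eq ▸ hx]
              simp only [Set.mem_singleton_iff]
              field_simp
              linarith
            · intro hx
              simp only [Set.mem_singleton_iff] at hx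
              subst hx
              simp only [Set.mem_setOf_eq]
              field_simp
              ring
          rw [this]
          exact hat 0 _ (div_ne_zero hc ha)
        rw [ae_iff]
        simpa only [not_not] using hpt
    have : ∀ᵐ x ∂ (ν 0),
        (Measure.pi fun j => ν ((0 : Fin (m+1)).succAbove j))
          (Prod.mk x ⁻¹' (e.symm ⁻¹' S)) = 0 := by
      filter_upwards [hae] with x hx
      have hset : (Prod.mk x ⁻¹' (e.symm ⁻¹' S))
          = {y : Fin m → ℝ | ∑ j, a (Fin.succ j) * y j = c - a 0 * x} := by
        ext y
        simp only [Set.mem_preimage, hSdef, Set.mem_setOf_eq, he]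
        have : e.symm (x, y) = Fin.cons x y := by
          simp [he, MeasurableEquiv.piFinSuccAbove, Fin.insertNth_zero', Fin.consEquiv]
        rw [this, Fin.sum_univ_succ]
        simp only [Fin.cons_zero, Fin.cons_succ]
        constructor <;> intro h <;> linarith
      rw [hset]
      exact ih _ (fun j => hprob _) (fun j => hat _) _ _ hx
    rw [lintegral_congr_ae this]
    simp

/-- For a random `n × n` real matrix of type `B_n` — the diagonal entries
`B i i` for `i ≠ 1` are (almost surely) fixed equal to `1`, and the variable entries
(all off-diagonal entries together with `B 1 1`) are independent with laws that are
atomless off `0` — the probability that `det B = c` is `0` for every nonzero real `c`. -/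
theorem typeB_det_eq_nonzero_const_prob_zero
    (n : ℕ) (hn : 1 ≤ n) (c : ℝ) (hc : c ≠ 0)
    (μ : Fin n → Fin n → Measure ℝ)
    [∀ i j, IsProbabilityMeasure (μ i j)]
    (hfixed : ∀ i : Fin n, i ≠ ⟨0, hn⟩ → μ i i = Measure.dirac 1)
    (hatomless : ∀ i j : Fin n, (i ≠ j ∨ (i = ⟨0, hn⟩ ∧ j = ⟨0, hn⟩)) →
      ∀ x : ℝ, x ≠ 0 → μ i j {x} = 0) :
    Measure.pi (fun i => Measure.pi (fun j => μ i j))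
      {B : Fin n → Fin n → ℝ | (Matrix.of B).det = c} = 0 := by
  obtain ⟨m, rfl⟩ : ∃ m, n = m + 1 := ⟨n - 1, (Nat.succ_pred_eq_of_pos hn).symm⟩
  -- atomlessness of the entries of row 0
  have hat0 : ∀ j : Fin (m + 1), ∀ x : ℝ, x ≠ 0 → μ 0 j {x} = 0 := by
    intro j x hx
    by_cases hj : j = ⟨0, hn⟩
    · exact hatomless 0 j (Or.inr ⟨rfl, hj⟩) x hx
    · exact hatomless 0 j (Or.inl fun h => hj h.symm) x hx
  set S : Set (Fin (m+1) → Fin (m+1) → ℝ) := {B | (Matrix.of B).det = c} with hSdef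
  have hdet : Measurable fun B : Fin (m+1) → Fin (m+1) → ℝ => (Matrix.of B).det := by
    simp only [Matrix.det_apply]
    refine Finset.measurable_sum _ fun σ _ => Measurable.const_smul ?_ _
    exact Finset.measurable_prod _ fun i _ =>
      (measurable_pi_apply i).comp (measurable_pi_apply (σ i))
  have hmS : MeasurableSet S := hdet (measurableSet_singleton c)
  set e := MeasurableEquiv.piFinSuccAbove (fun _ : Fin (m+1) => (Fin (m+1) → ℝ)) 0 with he
  have hmp := measurePreserving_piFinSuccAbove
    (fun i : Fin (m+1) => Measure.pi (fun j => μ i j)) 0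
  have key : Measure.pi (fun i => Measure.pi (fun j => μ i j)) S
      = ((Measure.pi fun j => μ 0 j).prod
          (Measure.pi fun i => Measure.pi fun j => μ ((0 : Fin (m+1)).succAbove i) j))
        (e.symm ⁻¹' S) := by
    rw [← hmp.measure_preimage_equiv]
    congr 1
    ext r
    rw [Set.mem_preimage, Set.mem_preimage, MeasurableEquiv.symm_apply_apply]
  rw [key, Measure.prod_apply_symm (e.symm.measurable hmS)]
  have hzero : ∀ y : Fin m → (Fin (m+1) → ℝ),
      (Measure.pi fun j => μ 0 j) ((fun x => (x, y)) ⁻¹' (e.symm ⁻¹' S)) = 0 := by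
    intro y
    have hset : ((fun x => (x, y)) ⁻¹' (e.symm ⁻¹' S))
        = {x : Fin (m+1) → ℝ | ∑ j : Fin (m+1), ((-1 : ℝ) ^ (j : ℕ) *
            (Matrix.of fun i k => y i (Fin.succAbove j k)).det) * x j = c} := by
      ext x
      simp only [Set.mem_preimage, Set.mem_setOf_eq, hSdef]
      have hsymm : e.symm (x, y) = Fin.cons x y := by
        simp [he, MeasurableEquiv.piFinSuccAbove, Fin.insertNth_zero', Fin.consEquiv]
      rw [hsymm]
      rw [Matrix.det_succ_row_zero]
      have hterm : ∀ j : Fin (m+1),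
          (-1 : ℝ) ^ (j : ℕ) * (Matrix.of (Fin.cons x y) 0 j) *
            ((Matrix.of (Fin.cons x y)).submatrix Fin.succ j.succAbove).det
          = ((-1 : ℝ) ^ (j : ℕ) *
              (Matrix.of fun i k => y i (Fin.succAbove j k)).det) * x j := by
        intro j
        have h1 : (Matrix.of (Fin.cons x y) : Matrix _ _ ℝ) 0 j = x j := rfl
        have h2 : (Matrix.of (Fin.cons x y)).submatrix Fin.succ j.succAbove
            = Matrix.of fun i k => y i (Fin.succAbove j k) := by
          ext i k
          simp [Matrix.submatrix_apply, Fin.cons_succ]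
        rw [h1, h2]
        ring
      rw [Finset.sum_congr rfl fun j _ => hterm j]
    rw [hset]
    exact pi_linear_eq_const_zero (m+1) (fun j => μ 0 j)
      (fun j => inferInstance) hat0 _ c hc
  calc ∫⁻ y, (Measure.pi fun j => μ 0 j) ((fun x => (x, y)) ⁻¹' (e.symm ⁻¹' S))
        ∂(Measure.pi fun i => Measure.pi fun j => μ ((0 : Fin (m+1)).succAbove i) j)
      = ∫⁻ _, 0 ∂(Measure.pi fun i => Measure.pi fun j => μ ((0 : Fin (m+1)).succAbove i) j) :=
        lintegral_congr fun y => hzero y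
    _ = 0 := lintegral_zero
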